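/- arXiv:2406.13699 — 2 statements merged into one kernel-verified Lean document; each statement's English description precedes it below -/
import Mathlib

section
/- Let d ≥ 2, let n be a real number with n ≥ d, and let v : ℝ^d → ℝ be a positive C³ function satisfying Δv = P at every point, where P := (1/v)·((n/2)‖∇v‖² + c_n). Then for every real number t and every point of ℝ^d, div( P^(t-1)·v^(2-n)·∇P ) ≥ (t - 1/2)·P^(t-2)·v^(2-n)·‖∇P‖² + ((n-d)/n)·P^(t+1)·v^(1-n), where div denotes the Euclidean divergence. -/
open MeasureTheory Metric

/-- The Euclidean Laplacian: the trace of the Hessian. -/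
noncomputable def lap {d : ℕ} (u : EuclideanSpace ℝ (Fin d) → ℝ)
    (x : EuclideanSpace ℝ (Fin d)) : ℝ :=
  ∑ i, iteratedFDeriv ℝ 2 u x ![EuclideanSpace.single i 1, EuclideanSpace.single i 1]

/-- The Euclidean divergence of a vector field. -/
noncomputable def diverg {d : ℕ} (V : EuclideanSpace ℝ (Fin d) → EuclideanSpace ℝ (Fin d))
    (x : EuclideanSpace ℝ (Fin d)) : ℝ :=
  ∑ i, fderiv ℝ V x (EuclideanSpace.single i 1) i

/-- The squared Frobenius norm of the Hessian: the sum of the squares of all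
second partial derivatives. -/
noncomputable def hessNormSq {d : ℕ} (v : EuclideanSpace ℝ (Fin d) → ℝ)
    (x : EuclideanSpace ℝ (Fin d)) : ℝ :=
  ∑ i, ∑ j,
    (iteratedFDeriv ℝ 2 v x ![EuclideanSpace.single i 1, EuclideanSpace.single j 1]) ^ 2

/-- The constant `c_n`: `2/(n-2)` for `n > 2` and `1/2` for `n = 2`. -/
noncomputable def cExp (n : ℝ) : ℝ := if 2 < n then 2 / (n - 2) else 1 / 2



open Finset



set_option maxHeartbeats 1000000

/-- Pure real-number core inequality. -/
private lemma core_ineq {dR n a V c G2 S AG2 q P2 : ℝ} (hd2 : 2 ≤ dR) (hn : dR ≤ n)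
    (ha : 0 < a) (hV : 0 < V) (hc : 0 < c)
    (hG2nn : 0 ≤ G2) (hSnn : 0 ≤ S)
    (hdiag : a^2 ≤ dR * S)
    (hP2eq : V^2 * P2 = n^2 * AG2 - 2*n*a*q + a^2*G2)
    (hCS : (G2 * (G2*a - q))^2 ≤ (G2^2*S - G2*AG2) * (G2^2*(dR-1)))
    (hP20 : G2 = 0 → P2 = 0)
    (hVa : n/2 * G2 + c = V * a) :
    V/2 * P2 + (2*n - dR)/n * a^3 ≤ n * a * S := by
  have hn0 : (0:ℝ) < n := by linarith
  have hn2S : (2*n - dR)*a^2 ≤ n^2*S := by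
    nlinarith [hdiag, sq_nonneg (n - dR), mul_le_mul_of_nonneg_right hdiag (sq_nonneg a)]
  rcases eq_or_lt_of_le hG2nn with hG20 | hG2pos
  · rw [hP20 hG20.symm]
    rw [mul_zero, zero_add, div_mul_eq_mul_div, div_le_iff₀ hn0]
    nlinarith [hn2S, mul_pos ha (mul_pos ha ha)]
  · have h4 : (G2*a - q)^2 ≤ (dR-1)*G2*(G2*S - AG2) := by
      refine le_of_mul_le_mul_right ?_ (pow_pos hG2pos 2)
      calc (G2*a - q)^2 * G2^2 = (G2 * (G2*a - q))^2 := by ring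
        _ ≤ (G2^2*S - G2*AG2) * (G2^2*(dR-1)) := hCS
        _ = ((dR-1)*G2*(G2*S - AG2)) * G2^2 := by ring
    have hA' : n^2*(G2*a - q)^2 ≤ n^2*((dR-1)*G2*(G2*S - AG2)) :=
      mul_le_mul_of_nonneg_left h4 (sq_nonneg n)
    have hB' : (0:ℝ) ≤ (n*(a*G2 - q) - (dR-1)*a*G2)^2 := sq_nonneg _
    have h5 : 0 ≤ (dR-1)*G2*(n^2*(S*G2 - AG2) + 2*n*a*q - (2*n - dR + 1)*a^2*G2) := by
      nlinarith [hA', hB']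
    have hI : 0 ≤ n^2*(S*G2 - AG2) + 2*n*a*q - (2*n - dR + 1)*a^2*G2 := by
      nlinarith [h5, mul_pos (show (0:ℝ) < dR-1 by linarith) hG2pos]
    have hVa' : a*V = n/2*G2 + c := by linarith
    refine le_of_mul_le_mul_right ?_ (show (0:ℝ) < 2*n*V by positivity)
    have s1 : (2*n - dR)/n*a^3*(2*n*V) = 2*(2*n-dR)*a^2*(n/2*G2 + c) := by
      rw [← hVa']; field_simp
    have s3 : V/2*P2*(2*n*V) = n*(n^2 * AG2 - 2*n*a*q + a^2*G2) := by
      calc V/2*P2*(2*n*V) = n*(V^2*P2) := by ring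
        _ = n*(n^2 * AG2 - 2*n*a*q + a^2*G2) := by rw [hP2eq]
    have s2 : n*a*S*(2*n*V) = 2*n^2*S*(n/2*G2 + c) := by rw [← hVa']; ring
    rw [add_mul, s1, s3, s2]
    have t1 : 0 ≤ n*(n^2*(S*G2 - AG2) + 2*n*a*q - (2*n - dR + 1)*a^2*G2) :=
      mul_nonneg hn0.le hI
    have t2 : 2*c*((2*n-dR)*a^2) ≤ 2*c*(n^2*S) :=
      mul_le_mul_of_nonneg_left hn2S (by linarith)
    nlinarith [t1, t2]

/-- Core algebraic lemma with matrices/vectors as finite sums. -/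
private lemma core_alg {d : ℕ} (hd : 2 ≤ d) {n a V c : ℝ} (hn : (d:ℝ) ≤ n) (ha : 0 < a)
    (hV : 0 < V) (hc : 0 < c) (A : Fin d → Fin d → ℝ) (g p : Fin d → ℝ)
    (htr : ∑ i, A i i = a)
    (hgrad : ∀ j, V * p j + a * g j = n * ∑ i, g i * A i j)
    (hVa : n/2 * (∑ i, g i ^ 2) + c = V * a) :
    V/2 * (∑ i, p i ^ 2) + (2*n - (d:ℝ))/n * a^3 ≤ n * a * (∑ i, ∑ j, A i j ^ 2) := by
  have hd2 : (2:ℝ) ≤ (d:ℝ) := by exact_mod_cast hd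
  have hn0 : (0:ℝ) < n := by linarith
  have mulsum1 : ∀ (C : ℝ) (f : Fin d → ℝ), ∑ i, C * f i = C * ∑ i, f i := by
    intro C f; rw [Finset.mul_sum]
  have mulsum2 : ∀ (C : ℝ) (F : Fin d → Fin d → ℝ),
      ∑ i, ∑ j, C * F i j = C * (∑ i, ∑ j, F i j) := by
    intro C F
    rw [Finset.mul_sum]
    exact Finset.sum_congr rfl fun i _ => by rw [Finset.mul_sum]
  have prodsum : ∀ (f h : Fin d → ℝ), ∑ i, ∑ j, f i * h j = (∑ i, f i) * (∑ j, h j) := by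
    intro f h
    rw [Finset.sum_mul]
    exact Finset.sum_congr rfl fun i _ => by rw [Finset.mul_sum]
  have hG2nn : (0:ℝ) ≤ ∑ i, g i ^ 2 := Finset.sum_nonneg fun i _ => sq_nonneg _
  have hSnn : (0:ℝ) ≤ ∑ i, ∑ j, A i j ^ 2 :=
    Finset.sum_nonneg fun i _ => Finset.sum_nonneg fun j _ => sq_nonneg _
  have hdiag : a^2 ≤ (d:ℝ) * (∑ i, ∑ j, A i j ^ 2) := by
    have h1 : (∑ i, A i i)^2 ≤ (Finset.univ (α := Fin d)).card * ∑ i, (A i i)^2 :=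
      sq_sum_le_card_mul_sum_sq
    have h2 : ∑ i, (A i i)^2 ≤ ∑ i, ∑ j, A i j ^ 2 :=
      Finset.sum_le_sum fun i _ =>
        Finset.single_le_sum (f := fun j => A i j ^ 2) (fun j _ => sq_nonneg _) (mem_univ i)
    rw [htr] at h1
    simp only [Finset.card_univ, Fintype.card_fin] at h1
    nlinarith [h1, h2, Nat.cast_nonneg (α := ℝ) d]
  have hVp : ∀ j, V * p j = n * (∑ i, g i * A i j) - a * g j := by
    intro j; have := hgrad j; linarith
  have hP2eq : V^2 * (∑ i, p i ^ 2)
      = n^2 * (∑ j, (∑ i, g i * A i j) ^ 2) - 2*n*a*(∑ j, g j * (∑ i, g i * A i j))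
        + a^2*(∑ i, g i ^ 2) := by
    calc V^2 * (∑ i, p i ^ 2) = ∑ j, (V * p j)^2 := by
          rw [Finset.mul_sum]; exact Finset.sum_congr rfl fun j _ => by ring
      _ = ∑ j, (n^2 * (∑ i, g i * A i j)^2 - 2*n*a*(g j * (∑ i, g i * A i j))
            + a^2 * g j ^2) :=
          Finset.sum_congr rfl fun j _ => by rw [hVp j]; ring
      _ = _ := by
          rw [Finset.sum_add_distrib, Finset.sum_sub_distrib]
          rw [mulsum1 (n^2) (fun j => (∑ i, g i * A i j)^2)]
          rw [mulsum1 (2*n*a) (fun j => g j * (∑ i, g i * A i j))]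
          rw [mulsum1 (a^2) (fun j => g j ^ 2)]
  have cs2 : ∀ (F G : Fin d → Fin d → ℝ),
      (∑ i, ∑ j, F i j * G i j)^2 ≤ (∑ i, ∑ j, F i j ^2) * (∑ i, ∑ j, G i j ^2) := by
    intro F G
    have := Finset.sum_mul_sq_le_sq_mul_sq Finset.univ
      (fun pp : Fin d × Fin d => F pp.1 pp.2) (fun pp : Fin d × Fin d => G pp.1 pp.2)
    simpa [Fintype.sum_prod_type] using this
  have eAgq : ∑ i, ∑ j, A i j * (g i * g j) = ∑ j, g j * (∑ i, g i * A i j) := by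
    rw [Finset.sum_comm]
    refine Finset.sum_congr rfl fun j _ => ?_
    rw [Finset.mul_sum]
    exact Finset.sum_congr rfl fun i _ => by ring
  have eAAg : ∑ i, ∑ j, A i j * (g i * (∑ k, g k * A k j)) = ∑ j, (∑ i, g i * A i j) ^ 2 := by
    rw [Finset.sum_comm]
    refine Finset.sum_congr rfl fun j _ => ?_
    rw [sq, Finset.sum_mul]
    exact Finset.sum_congr rfl fun i _ => by ring
  -- e2 : |B|^2
  have e2 : ∑ i, ∑ j, ((∑ k, g k ^ 2) * A i j - g i * (∑ k, g k * A k j))^2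
      = ((∑ k, g k ^ 2))^2 * (∑ i, ∑ j, A i j ^ 2)
        - (∑ k, g k ^ 2) * (∑ j, (∑ i, g i * A i j) ^ 2) := by
    have step : ∑ i, ∑ j, ((∑ k, g k ^ 2) * A i j - g i * (∑ k, g k * A k j))^2
        = (∑ i, ∑ j, (∑ k, g k ^ 2)^2 * (A i j)^2)
          + (∑ i, ∑ j, (g i)^2 * ((∑ k, g k * A k j))^2)
          - (∑ i, ∑ j, (2*(∑ k, g k ^ 2))*(A i j * (g i * (∑ k, g k * A k j)))) := by
      rw [← Finset.sum_add_distrib, ← Finset.sum_sub_distrib]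
      refine Finset.sum_congr rfl fun i _ => ?_
      rw [← Finset.sum_add_distrib, ← Finset.sum_sub_distrib]
      exact Finset.sum_congr rfl fun j _ => by ring
    have a1 : ∑ i, ∑ j, (∑ k, g k ^ 2)^2 * (A i j)^2
        = (∑ k, g k ^ 2)^2 * (∑ i, ∑ j, A i j ^ 2) := mulsum2 _ _
    have a2 : ∑ i, ∑ j, (g i)^2 * ((∑ k, g k * A k j))^2
        = (∑ i, (g i)^2) * (∑ j, ((∑ k, g k * A k j))^2) := prodsum _ _
    have a3 : ∑ i, ∑ j, (2*(∑ k, g k ^ 2))*(A i j * (g i * (∑ k, g k * A k j)))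
        = (2*(∑ k, g k ^ 2)) * (∑ i, ∑ j, A i j * (g i * (∑ k, g k * A k j))) := mulsum2 _ _
    rw [step, a1, a2, a3, eAAg]
    ring
  -- e1 : <B, Pi>
  have e1 : ∑ i, ∑ j, ((∑ k, g k ^ 2) * A i j - g i * (∑ k, g k * A k j))
        * ((if i = j then (∑ k, g k ^ 2) else 0) - g i * g j)
      = (∑ k, g k ^ 2) * ((∑ k, g k ^ 2)*a - (∑ j, g j * (∑ i, g i * A i j))) := by
    have step : ∑ i, ∑ j, ((∑ k, g k ^ 2) * A i j - g i * (∑ k, g k * A k j))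
          * ((if i = j then (∑ k, g k ^ 2) else 0) - g i * g j)
        = (∑ i, ∑ j, (if i = j then
              (∑ k, g k ^ 2) * ((∑ k, g k ^ 2) * A i j - g i * (∑ k, g k * A k j)) else 0))
          - ((∑ i, ∑ j, (∑ k, g k ^ 2) * (A i j * (g i * g j)))
            - (∑ i, ∑ j, (g i)^2 * ((∑ k, g k * A k j) * g j))) := by
      rw [← Finset.sum_sub_distrib, ← Finset.sum_sub_distrib]
      refine Finset.sum_congr rfl fun i _ => ?_
      rw [← Finset.sum_sub_distrib, ← Finset.sum_sub_distrib]
      refine Finset.sum_congr rfl fun j _ => ?_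
      by_cases h : i = j <;> simp [h] <;> ring
    have b1 : ∑ i, ∑ j, (if i = j then
          (∑ k, g k ^ 2) * ((∑ k, g k ^ 2) * A i j - g i * (∑ k, g k * A k j)) else 0)
        = ∑ i, (∑ k, g k ^ 2) * ((∑ k, g k ^ 2) * A i i - g i * (∑ k, g k * A k i)) :=
      Finset.sum_congr rfl fun i _ => by simp
    have b2 : ∑ i, ∑ j, (∑ k, g k ^ 2) * (A i j * (g i * g j))
        = (∑ k, g k ^ 2) * (∑ i, ∑ j, A i j * (g i * g j)) := mulsum2 _ _
    have b3 : ∑ i, ∑ j, (g i)^2 * ((∑ k, g k * A k j) * g j)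
        = (∑ i, (g i)^2) * (∑ j, (∑ k, g k * A k j) * g j) := prodsum _ _
    have b3' : ∑ j, (∑ k, g k * A k j) * g j = ∑ j, g j * (∑ i, g i * A i j) :=
      Finset.sum_congr rfl fun j _ => by ring
    have b4 : ∑ i, (∑ k, g k ^ 2) * ((∑ k, g k ^ 2) * A i i - g i * (∑ k, g k * A k i))
        = (∑ k, g k ^ 2)^2 * (∑ i, A i i)
          - (∑ k, g k ^ 2) * (∑ i, g i * (∑ k, g k * A k i)) := by
      calc ∑ i, (∑ k, g k ^ 2) * ((∑ k, g k ^ 2) * A i i - g i * (∑ k, g k * A k i))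
          = ∑ i, ((∑ k, g k ^ 2)^2 * A i i
              - (∑ k, g k ^ 2) * (g i * (∑ k, g k * A k i))) :=
            Finset.sum_congr rfl fun i _ => by ring
        _ = (∑ i, (∑ k, g k ^ 2)^2 * A i i)
              - ∑ i, (∑ k, g k ^ 2) * (g i * (∑ k, g k * A k i)) := by
            rw [Finset.sum_sub_distrib]
        _ = _ := by
            rw [mulsum1 ((∑ k, g k ^ 2)^2) (fun i => A i i),
              mulsum1 (∑ k, g k ^ 2) (fun i => g i * (∑ k, g k * A k i))]
    rw [step, b1, b2, b3, b3', b4, eAgq, htr]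
    ring
  -- e3 : |Pi|^2
  have e3 : ∑ i, ∑ j, ((if i = j then (∑ k, g k ^ 2) else 0) - g i * g j)^2
      = (∑ k, g k ^ 2)^2 * ((d:ℝ) - 1) := by
    have step : ∑ i, ∑ j, ((if i = j then (∑ k, g k ^ 2) else 0) - g i * g j)^2
        = (∑ i, ∑ j, (if i = j then
            (∑ k, g k ^ 2)^2 - 2*(∑ k, g k ^ 2)*(g i * g j) else 0))
          + (∑ i, ∑ j, (g i)^2 * (g j)^2) := by
      rw [← Finset.sum_add_distrib]
      refine Finset.sum_congr rfl fun i _ => ?_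
      rw [← Finset.sum_add_distrib]
      refine Finset.sum_congr rfl fun j _ => ?_
      by_cases h : i = j <;> simp [h] <;> ring
    have c1 : ∑ i, ∑ j, (if i = j then
          (∑ k, g k ^ 2)^2 - 2*(∑ k, g k ^ 2)*(g i * g j) else 0)
        = ∑ i, ((∑ k, g k ^ 2)^2 - 2*(∑ k, g k ^ 2)*(g i * g i)) :=
      Finset.sum_congr rfl fun i _ => by simp
    have c15 : ∑ i, ((∑ k, g k ^ 2)^2 - 2*(∑ k, g k ^ 2)*(g i * g i))
        = (∑ _i : Fin d, (∑ k, g k ^ 2)^2) - ∑ i, (2*(∑ k, g k ^ 2))*(g i * g i) := by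
      rw [Finset.sum_sub_distrib]
    have c2 : ∑ i, (2*(∑ k, g k ^ 2))*(g i * g i)
        = (2*(∑ k, g k ^ 2)) * ∑ i, (g i * g i) := mulsum1 _ _
    have c2' : ∑ i, (g i * g i) = ∑ k, g k ^ 2 :=
      Finset.sum_congr rfl fun i _ => by ring
    have c3 : ∑ i, ∑ j, (g i)^2 * (g j)^2 = (∑ i, (g i)^2) * (∑ j, (g j)^2) := prodsum _ _
    have c4 : ∑ _i : Fin d, ((∑ k, g k ^ 2)^2 : ℝ) = (d:ℝ) * (∑ k, g k ^ 2)^2 := by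
      rw [Finset.sum_const, Finset.card_univ, Fintype.card_fin, nsmul_eq_mul]
    rw [step, c1, c15, c2, c2', c3, c4]
    ring
  have hCS : ((∑ k, g k ^ 2) * ((∑ k, g k ^ 2)*a - (∑ j, g j * (∑ i, g i * A i j))))^2
      ≤ ((∑ k, g k ^ 2)^2 * (∑ i, ∑ j, A i j ^ 2)
          - (∑ k, g k ^ 2) * (∑ j, (∑ i, g i * A i j) ^ 2))
        * ((∑ k, g k ^ 2)^2 * ((d:ℝ)-1)) := by
    rw [← e1, ← e2, ← e3]
    exact cs2 _ _
  have hP20 : (∑ i, g i ^ 2) = 0 → (∑ i, p i ^ 2) = 0 := by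
    intro hG0
    have hg0 : ∀ i, g i = 0 := by
      intro i
      have h := (Finset.sum_eq_zero_iff_of_nonneg (fun i _ => sq_nonneg (g i))).mp hG0
      exact (pow_eq_zero_iff two_ne_zero).mp (h i (mem_univ i))
    refine Finset.sum_eq_zero fun j _ => ?_
    have h := hVp j
    rw [hg0 j] at h
    have h2 : ∑ i, g i * A i j = 0 := Finset.sum_eq_zero fun i _ => by rw [hg0 i]; ring
    rw [h2] at h
    have hpj : p j = 0 := by
      have hVj : V * p j = 0 := by rw [h]; ring
      exact (mul_eq_zero.mp hVj).resolve_left hV.ne'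
    rw [hpj]; ring
  exact core_ineq hd2 hn ha hV hc hG2nn hSnn hdiag hP2eq hCS hP20 hVa


section Helpers

private lemma grad_coord {d : ℕ} (f : EuclideanSpace ℝ (Fin d) → ℝ)
    (x : EuclideanSpace ℝ (Fin d)) (i : Fin d) :
    gradient f x i = fderiv ℝ f x (EuclideanSpace.single i 1) := by
  have h1 : (inner ℝ (gradient f x) (EuclideanSpace.single i (1:ℝ)) : ℝ)
      = fderiv ℝ f x (EuclideanSpace.single i 1) := InnerProductSpace.toDual_symm_apply
  rw [EuclideanSpace.inner_single_right] at h1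
  simpa using h1

private lemma norm_sq_eq_sum {d : ℕ} (y : EuclideanSpace ℝ (Fin d)) :
    ‖y‖^2 = ∑ i, (y i)^2 := by
  rw [EuclideanSpace.norm_eq, Real.sq_sqrt (Finset.sum_nonneg fun i _ => sq_nonneg _)]
  exact Finset.sum_congr rfl fun i _ => sq_abs (y i)

private lemma fderiv_fderiv_apply {d : ℕ} {u : EuclideanSpace ℝ (Fin d) → ℝ}
    {x : EuclideanSpace ℝ (Fin d)} (hx : DifferentiableAt ℝ (fderiv ℝ u) x)
    (w z : EuclideanSpace ℝ (Fin d)) :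
    fderiv ℝ (fun y => fderiv ℝ u y w) x z = fderiv ℝ (fderiv ℝ u) x z w := by
  have h : HasFDerivAt (fun y => fderiv ℝ u y w)
      ((ContinuousLinearMap.apply ℝ ℝ w).comp (fderiv ℝ (fderiv ℝ u) x)) x :=
    (ContinuousLinearMap.apply ℝ ℝ w).hasFDerivAt.comp x hx.hasFDerivAt
  rw [h.fderiv]; rfl

private lemma clairaut {d : ℕ} {u : EuclideanSpace ℝ (Fin d) → ℝ} (hu : ContDiff ℝ 2 u)
    (x : EuclideanSpace ℝ (Fin d)) (w z : EuclideanSpace ℝ (Fin d)) :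
    fderiv ℝ (fun y => fderiv ℝ u y w) x z = fderiv ℝ (fun y => fderiv ℝ u y z) x w := by
  have hdiff : ∀ y, HasFDerivAt u (fderiv ℝ u y) y := fun y =>
    ((hu.differentiable two_ne_zero) y).hasFDerivAt
  have hx : DifferentiableAt ℝ (fderiv ℝ u) x :=
    ((hu.fderiv_right (m := 1) (by norm_num)).differentiable one_ne_zero).differentiableAt
  rw [fderiv_fderiv_apply hx, fderiv_fderiv_apply hx]
  exact second_derivative_symmetric hdiff hx.hasFDerivAt z w

end Helpers

/-- Lemma 2.3, Euclidean case: the differential inequality for the P-function. -/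
theorem stmt_8 (d : ℕ) (hd : 2 ≤ d) (n : ℝ) (hn : (d : ℝ) ≤ n)
    (v : EuclideanSpace ℝ (Fin d) → ℝ) (hv : ContDiff ℝ 3 v) (hvpos : ∀ x, 0 < v x)
    (P : EuclideanSpace ℝ (Fin d) → ℝ)
    (hP : ∀ x, P x = (1 / v x) * ((n / 2) * ‖gradient v x‖ ^ 2 + cExp n))
    (heq : ∀ x, lap v x = P x) :
    ∀ (t : ℝ) (x : EuclideanSpace ℝ (Fin d)),
      diverg (fun y => (P y ^ (t - 1) * (v y) ^ ((2 : ℝ) - n)) • gradient P y) x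
      ≥ (t - 1 / 2) * P x ^ (t - 2) * (v x) ^ ((2 : ℝ) - n) * ‖gradient P x‖ ^ 2
        + ((n - (d : ℝ)) / n) * P x ^ (t + 1) * (v x) ^ ((1 : ℝ) - n) := by
  classical
  intro t x
  have hd2 : (2:ℝ) ≤ (d:ℝ) := by exact_mod_cast hd
  have hn2 : (2:ℝ) ≤ n := le_trans hd2 hn
  have hn0 : (0:ℝ) < n := by linarith
  have hcpos : 0 < cExp n := by
    unfold cExp; split_ifs with h
    · have h2 : 0 < n - 2 := by linarith
      positivity
    · norm_num
  have hPpos : ∀ y, 0 < P y := by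
    intro y
    rw [hP y]
    have h1 : 0 < 1 / v y := by
      rw [one_div]
      exact inv_pos.mpr (hvpos y)
    have h2 : 0 < (n/2) * ‖gradient v y‖^2 + cExp n :=
      add_pos_of_nonneg_of_pos (mul_nonneg (by linarith) (sq_nonneg _)) hcpos
    exact mul_pos h1 h2
  -- smoothness facts
  have hvC2 : ContDiff ℝ 2 v := hv.of_le (by norm_num)
  have hvC1 : Differentiable ℝ v := hvC2.differentiable two_ne_zero
  have hv1 : ∀ j : Fin d, ContDiff ℝ 2 (fun y => fderiv ℝ v y (EuclideanSpace.single j 1)) :=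
    fun j => (hv.fderiv_right (m := 2) (by norm_num)).clm_apply contDiff_const
  have hv1d : ∀ j : Fin d, Differentiable ℝ (fun y => fderiv ℝ v y (EuclideanSpace.single j 1)) :=
    fun j => (hv1 j).differentiable two_ne_zero
  have hv2 : ∀ i j : Fin d, Differentiable ℝ
      (fun y => fderiv ℝ (fun z => fderiv ℝ v z (EuclideanSpace.single i 1)) y
        (EuclideanSpace.single j 1)) :=
    fun i j => (((hv1 i).fderiv_right (m := 1) (by norm_num)).clm_apply contDiff_const
      ).differentiable one_ne_zero
  -- P as an explicit formula
  have hPfun : P = fun y => (v y)⁻¹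
      * ((n/2) * (∑ j, (fderiv ℝ v y (EuclideanSpace.single j 1))^2) + cExp n) := by
    funext y
    have hsc : ∑ i, (gradient v y i)^2
        = ∑ j, (fderiv ℝ v y (EuclideanSpace.single j 1))^2 :=
      Finset.sum_congr rfl fun i _ => by rw [grad_coord]
    rw [hP y, one_div, norm_sq_eq_sum, hsc]
  have hPC2 : ContDiff ℝ 2 P := by
    rw [hPfun]
    refine ContDiff.mul (ContDiff.inv hvC2 fun y => (hvpos y).ne') ?_
    exact (contDiff_const.mul (ContDiff.sum fun j _ => (hv1 j).pow 2)).add contDiff_const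
  have hPdiff : Differentiable ℝ P := hPC2.differentiable two_ne_zero
  have hfP : ContDiff ℝ 1 (fderiv ℝ P) := hPC2.fderiv_right (m := 1) (by norm_num)
  have hpj : ∀ j : Fin d, Differentiable ℝ (fun y => fderiv ℝ P y (EuclideanSpace.single j 1)) :=
    fun j => (hfP.clm_apply contDiff_const).differentiable one_ne_zero
  -- function identity v * P = (n/2) |grad v|^2 + c
  have hvP : (fun y => v y * P y)
      = (fun y => (n/2) * (∑ j, (fderiv ℝ v y (EuclideanSpace.single j 1))^2) + cExp n) := by
    funext y
    rw [hPfun]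
    have hvne : v y ≠ 0 := (hvpos y).ne'
    field_simp
  -- I1 : first derivative of the identity
  have I1 : ∀ (y : EuclideanSpace ℝ (Fin d)) (j : Fin d),
      v y * fderiv ℝ P y (EuclideanSpace.single j 1)
        + P y * fderiv ℝ v y (EuclideanSpace.single j 1)
      = n * ∑ i, fderiv ℝ v y (EuclideanSpace.single i 1)
          * fderiv ℝ (fun z => fderiv ℝ v z (EuclideanSpace.single i 1)) y
              (EuclideanSpace.single j 1) := by
    intro y j
    have hL : HasFDerivAt (fun z => v z * P z)
        (v y • fderiv ℝ P y + P y • fderiv ℝ v y) y :=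
      (hvC1 y).hasFDerivAt.mul (hPdiff y).hasFDerivAt
    have hsum : HasFDerivAt
        (fun z => ∑ i, (fderiv ℝ v z (EuclideanSpace.single i 1))^2)
        (∑ i, (2 * fderiv ℝ v y (EuclideanSpace.single i 1))
          • fderiv ℝ (fun z => fderiv ℝ v z (EuclideanSpace.single i 1)) y) y := by
      refine HasFDerivAt.fun_sum fun i _ => ?_
      have hui : HasFDerivAt (fun z => fderiv ℝ v z (EuclideanSpace.single i 1))
          (fderiv ℝ (fun z => fderiv ℝ v z (EuclideanSpace.single i 1)) y) y :=
        ((hv1d i) y).hasFDerivAt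
      have h2 := hui.fun_mul hui
      have h3 : (2 * fderiv ℝ v y (EuclideanSpace.single i 1))
            • fderiv ℝ (fun z => fderiv ℝ v z (EuclideanSpace.single i 1)) y
          = fderiv ℝ v y (EuclideanSpace.single i 1)
              • fderiv ℝ (fun z => fderiv ℝ v z (EuclideanSpace.single i 1)) y
            + fderiv ℝ v y (EuclideanSpace.single i 1)
              • fderiv ℝ (fun z => fderiv ℝ v z (EuclideanSpace.single i 1)) y := by
        rw [two_mul, add_smul]
      rw [h3]
      simpa [pow_two] using h2
    have hR : HasFDerivAt
        (fun z => (n/2) * (∑ i, (fderiv ℝ v z (EuclideanSpace.single i 1))^2) + cExp n)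
        ((n/2) • (∑ i, (2 * fderiv ℝ v y (EuclideanSpace.single i 1))
          • fderiv ℝ (fun z => fderiv ℝ v z (EuclideanSpace.single i 1)) y)) y :=
      (hsum.const_mul (n/2)).add_const (cExp n)
    rw [hvP] at hL
    have heqd := hL.unique hR
    have happ := congrArg (fun (L : EuclideanSpace ℝ (Fin d) →L[ℝ] ℝ)
      => L (EuclideanSpace.single j 1)) heqd
    simp only [ContinuousLinearMap.add_apply, ContinuousLinearMap.coe_smul', Pi.smul_apply,
      ContinuousLinearMap.coe_sum', Finset.sum_apply, smul_eq_mul] at happ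
    rw [happ]
    rw [Finset.mul_sum, Finset.mul_sum]
    exact Finset.sum_congr rfl fun i _ => by ring
  -- I2 : the Laplace equation in coordinates, as a function identity
  have hfvdiff : Differentiable ℝ (fderiv ℝ v) :=
    (hv.fderiv_right (m := 1) (by norm_num)).differentiable one_ne_zero
  have I2 : ∀ y : EuclideanSpace ℝ (Fin d),
      ∑ j, fderiv ℝ (fun w => fderiv ℝ v w (EuclideanSpace.single j 1)) y
        (EuclideanSpace.single j 1) = P y := by
    intro y
    rw [← heq y]
    unfold lap
    refine (Finset.sum_congr rfl fun j _ => ?_).symm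
    rw [iteratedFDeriv_two_apply]
    rw [fderiv_fderiv_apply (hfvdiff y)]
    simp
  -- I3 : gradient of P equals contracted third derivatives
  have I3 : ∀ (y : EuclideanSpace ℝ (Fin d)) (i : Fin d),
      ∑ j, fderiv ℝ (fun z => fderiv ℝ
          (fun w => fderiv ℝ v w (EuclideanSpace.single i 1)) z (EuclideanSpace.single j 1)) y
        (EuclideanSpace.single j 1)
      = fderiv ℝ P y (EuclideanSpace.single i 1) := by
    intro y i
    have hL : HasFDerivAt
        (fun z => ∑ j, fderiv ℝ (fun w => fderiv ℝ v w (EuclideanSpace.single j 1)) z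
          (EuclideanSpace.single j 1))
        (∑ j, fderiv ℝ (fun z => fderiv ℝ (fun w => fderiv ℝ v w (EuclideanSpace.single j 1)) z
          (EuclideanSpace.single j 1)) y) y :=
      HasFDerivAt.fun_sum fun j _ => ((hv2 j j) y).hasFDerivAt
    have hfunEq : (fun z => ∑ j, fderiv ℝ (fun w => fderiv ℝ v w (EuclideanSpace.single j 1)) z
        (EuclideanSpace.single j 1)) = P := funext fun z => I2 z
    rw [hfunEq] at hL
    have heqd := hL.unique (hPdiff y).hasFDerivAt
    have happ := congrArg (fun (L : EuclideanSpace ℝ (Fin d) →L[ℝ] ℝ)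
      => L (EuclideanSpace.single i 1)) heqd
    simp only [ContinuousLinearMap.coe_sum', Finset.sum_apply] at happ
    rw [← happ]
    refine Finset.sum_congr rfl fun j _ => ?_
    have inner_swap : (fun z => fderiv ℝ (fun w => fderiv ℝ v w (EuclideanSpace.single i 1)) z
          (EuclideanSpace.single j 1))
        = (fun z => fderiv ℝ (fun w => fderiv ℝ v w (EuclideanSpace.single j 1)) z
          (EuclideanSpace.single i 1)) :=
      funext fun z => clairaut hvC2 z (EuclideanSpace.single i 1) (EuclideanSpace.single j 1)
    rw [inner_swap]
    exact clairaut (hv1 j) y (EuclideanSpace.single i 1) (EuclideanSpace.single j 1)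
  -- I4 : the equation for v * (laplacian of P)
  have I4 :
      v x * (∑ j, fderiv ℝ (fun z => fderiv ℝ P z (EuclideanSpace.single j 1)) x
          (EuclideanSpace.single j 1))
      = n * (∑ i, ∑ j, (fderiv ℝ (fun z => fderiv ℝ v z (EuclideanSpace.single i 1)) x
            (EuclideanSpace.single j 1))^2)
        + (n-2) * (∑ i, fderiv ℝ v x (EuclideanSpace.single i 1)
            * fderiv ℝ P x (EuclideanSpace.single i 1))
        - (P x)^2 := by
    have key : ∀ j : Fin d,
        v x * fderiv ℝ (fun z => fderiv ℝ P z (EuclideanSpace.single j 1)) x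
            (EuclideanSpace.single j 1)
          + 2 * (fderiv ℝ v x (EuclideanSpace.single j 1)
              * fderiv ℝ P x (EuclideanSpace.single j 1))
          + P x * fderiv ℝ (fun z => fderiv ℝ v z (EuclideanSpace.single j 1)) x
              (EuclideanSpace.single j 1)
        = n * ∑ i, ((fderiv ℝ (fun z => fderiv ℝ v z (EuclideanSpace.single i 1)) x
              (EuclideanSpace.single j 1))^2
            + fderiv ℝ v x (EuclideanSpace.single i 1)
              * fderiv ℝ (fun z => fderiv ℝ (fun w => fderiv ℝ v w (EuclideanSpace.single i 1)) z
                  (EuclideanSpace.single j 1)) x (EuclideanSpace.single j 1)) := by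
      intro j
      have hfunId : (fun z => v z * fderiv ℝ P z (EuclideanSpace.single j 1)
            + P z * fderiv ℝ v z (EuclideanSpace.single j 1))
          = (fun z => n * ∑ i, fderiv ℝ v z (EuclideanSpace.single i 1)
              * fderiv ℝ (fun w => fderiv ℝ v w (EuclideanSpace.single i 1)) z
                  (EuclideanSpace.single j 1)) :=
        funext fun z => by rw [I1 z j]
      have hL : HasFDerivAt
          (fun z => v z * fderiv ℝ P z (EuclideanSpace.single j 1)
            + P z * fderiv ℝ v z (EuclideanSpace.single j 1))
          ((v x • fderiv ℝ (fun z => fderiv ℝ P z (EuclideanSpace.single j 1)) x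
              + fderiv ℝ P x (EuclideanSpace.single j 1) • fderiv ℝ v x)
            + (P x • fderiv ℝ (fun z => fderiv ℝ v z (EuclideanSpace.single j 1)) x
              + fderiv ℝ v x (EuclideanSpace.single j 1) • fderiv ℝ P x)) x := by
        refine HasFDerivAt.add ?_ ?_
        · exact (hvC1 x).hasFDerivAt.mul ((hpj j) x).hasFDerivAt
        · exact (hPdiff x).hasFDerivAt.mul ((hv1d j) x).hasFDerivAt
      have hR : HasFDerivAt
          (fun z => n * ∑ i, fderiv ℝ v z (EuclideanSpace.single i 1)
              * fderiv ℝ (fun w => fderiv ℝ v w (EuclideanSpace.single i 1)) z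
                  (EuclideanSpace.single j 1))
          (n • ∑ i, (fderiv ℝ v x (EuclideanSpace.single i 1)
                • fderiv ℝ (fun z => fderiv ℝ (fun w => fderiv ℝ v w (EuclideanSpace.single i 1)) z
                    (EuclideanSpace.single j 1)) x
              + fderiv ℝ (fun w => fderiv ℝ v w (EuclideanSpace.single i 1)) x
                  (EuclideanSpace.single j 1)
                • fderiv ℝ (fun z => fderiv ℝ v z (EuclideanSpace.single i 1)) x)) x := by
        refine HasFDerivAt.const_mul ?_ n
        refine HasFDerivAt.fun_sum fun i _ => ?_
        exact ((hv1d i) x).hasFDerivAt.mul ((hv2 i j) x).hasFDerivAt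
      rw [hfunId] at hL
      have heqd := hL.unique hR
      have happ := congrArg (fun (L : EuclideanSpace ℝ (Fin d) →L[ℝ] ℝ)
        => L (EuclideanSpace.single j 1)) heqd
      simp only [ContinuousLinearMap.add_apply, ContinuousLinearMap.coe_smul', Pi.smul_apply,
        ContinuousLinearMap.coe_sum', Finset.sum_apply, smul_eq_mul] at happ
      have hrw : (n : ℝ) * ∑ i, ((fderiv ℝ (fun z => fderiv ℝ v z (EuclideanSpace.single i 1)) x
              (EuclideanSpace.single j 1))^2
            + fderiv ℝ v x (EuclideanSpace.single i 1)
              * fderiv ℝ (fun z => fderiv ℝ (fun w => fderiv ℝ v w (EuclideanSpace.single i 1)) z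
                  (EuclideanSpace.single j 1)) x (EuclideanSpace.single j 1))
          = n * ∑ i, (fderiv ℝ v x (EuclideanSpace.single i 1)
                * fderiv ℝ (fun z => fderiv ℝ (fun w => fderiv ℝ v w (EuclideanSpace.single i 1)) z
                    (EuclideanSpace.single j 1)) x (EuclideanSpace.single j 1)
              + fderiv ℝ (fun w => fderiv ℝ v w (EuclideanSpace.single i 1)) x
                    (EuclideanSpace.single j 1)
                * fderiv ℝ (fun z => fderiv ℝ v z (EuclideanSpace.single i 1)) x
                    (EuclideanSpace.single j 1)) := by
        rw [Finset.mul_sum, Finset.mul_sum]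
        exact Finset.sum_congr rfl fun i _ => by ring
      rw [hrw, ← happ]
      ring
    -- sum the key identity over j
    have hsumkey := Finset.sum_congr rfl (fun j (_ : j ∈ (Finset.univ : Finset (Fin d))) => key j)
    rw [Finset.sum_add_distrib, Finset.sum_add_distrib] at hsumkey
    -- rewrite each of the summed pieces
    have p1 : ∑ j, v x * fderiv ℝ (fun z => fderiv ℝ P z (EuclideanSpace.single j 1)) x
          (EuclideanSpace.single j 1)
        = v x * ∑ j, fderiv ℝ (fun z => fderiv ℝ P z (EuclideanSpace.single j 1)) x
          (EuclideanSpace.single j 1) := by rw [Finset.mul_sum]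
    have p2 : ∑ j, 2 * (fderiv ℝ v x (EuclideanSpace.single j 1)
          * fderiv ℝ P x (EuclideanSpace.single j 1))
        = 2 * ∑ j, fderiv ℝ v x (EuclideanSpace.single j 1)
            * fderiv ℝ P x (EuclideanSpace.single j 1) := by rw [Finset.mul_sum]
    have p3 : ∑ j, P x * fderiv ℝ (fun z => fderiv ℝ v z (EuclideanSpace.single j 1)) x
          (EuclideanSpace.single j 1) = P x * P x := by
      rw [← Finset.mul_sum, I2 x]
    have p4 : ∑ j, (n * ∑ i, ((fderiv ℝ (fun z => fderiv ℝ v z (EuclideanSpace.single i 1)) x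
            (EuclideanSpace.single j 1))^2
          + fderiv ℝ v x (EuclideanSpace.single i 1)
            * fderiv ℝ (fun z => fderiv ℝ (fun w => fderiv ℝ v w (EuclideanSpace.single i 1)) z
                (EuclideanSpace.single j 1)) x (EuclideanSpace.single j 1)))
        = n * ((∑ i, ∑ j, (fderiv ℝ (fun z => fderiv ℝ v z (EuclideanSpace.single i 1)) x
            (EuclideanSpace.single j 1))^2)
          + ∑ i, fderiv ℝ v x (EuclideanSpace.single i 1)
              * fderiv ℝ P x (EuclideanSpace.single i 1)) := by
      rw [← Finset.mul_sum]
      congr 1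
      rw [Finset.sum_comm]
      rw [← Finset.sum_add_distrib]
      refine Finset.sum_congr rfl fun i _ => ?_
      rw [Finset.sum_add_distrib, ← Finset.mul_sum, I3 x i]
    rw [p1, p2, p3, p4] at hsumkey
    nlinarith [hsumkey]
  -- the algebraic core inequality at x
  have hVa : n/2 * (∑ i, (fderiv ℝ v x (EuclideanSpace.single i 1))^2) + cExp n
      = v x * P x := by
    have := congrFun hvP x
    linarith [this]
  have htr : ∑ i, fderiv ℝ (fun z => fderiv ℝ v z (EuclideanSpace.single i 1)) x
      (EuclideanSpace.single i 1) = P x := I2 x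
  have core := core_alg hd hn (hPpos x) (hvpos x) hcpos
    (fun i j => fderiv ℝ (fun z => fderiv ℝ v z (EuclideanSpace.single i 1)) x
      (EuclideanSpace.single j 1))
    (fun i => fderiv ℝ v x (EuclideanSpace.single i 1))
    (fun i => fderiv ℝ P x (EuclideanSpace.single i 1))
    htr (fun j => I1 x j) hVa

  -- derivative of the coefficient function f = P^(t-1) * v^(2-n)
  have hfd : ∀ y : EuclideanSpace ℝ (Fin d),
      HasFDerivAt (fun z => P z ^ (t - 1) * (v z) ^ ((2:ℝ) - n))
        ((P y ^ (t - 1)) • ((((2:ℝ) - n) * v y ^ ((2:ℝ) - n - 1)) • fderiv ℝ v y)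
          + (v y ^ ((2:ℝ) - n)) • (((t - 1) * P y ^ (t - 1 - 1)) • fderiv ℝ P y)) y := by
    intro y
    have h1 : HasFDerivAt (fun z => P z ^ (t - 1))
        (((t - 1) * P y ^ (t - 1 - 1)) • fderiv ℝ P y) y :=
      (hPdiff y).hasFDerivAt.rpow_const (Or.inl (hPpos y).ne')
    have h2 : HasFDerivAt (fun z => (v z) ^ ((2:ℝ) - n))
        ((((2:ℝ) - n) * v y ^ ((2:ℝ) - n - 1)) • fderiv ℝ v y) y :=
      (hvC1 y).hasFDerivAt.rpow_const (Or.inl (hvpos y).ne')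
    exact h1.mul h2
  have hfdiff : Differentiable ℝ (fun z => P z ^ (t - 1) * (v z) ^ ((2:ℝ) - n)) :=
    fun y => (hfd y).differentiableAt
  have hgradPdiff : Differentiable ℝ (fun y => gradient P y) := by
    have hcont : Differentiable ℝ (fderiv ℝ P) := hfP.differentiable one_ne_zero
    have hclm := (InnerProductSpace.toDual ℝ
      (EuclideanSpace ℝ (Fin d))).symm.toContinuousLinearEquiv.toContinuousLinearMap.differentiable
    exact hclm.comp hcont
  have hW : Differentiable ℝ
      (fun y => (P y ^ (t - 1) * (v y) ^ ((2:ℝ) - n)) • gradient P y) :=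
    hfdiff.smul hgradPdiff
  -- coordinates of the divergence
  have hdivW : diverg (fun y => (P y ^ (t - 1) * (v y) ^ ((2:ℝ) - n)) • gradient P y) x
      = ∑ i, fderiv ℝ (fun y => (P y ^ (t - 1) * (v y) ^ ((2:ℝ) - n))
          * fderiv ℝ P y (EuclideanSpace.single i 1)) x (EuclideanSpace.single i 1) := by
    unfold diverg
    refine Finset.sum_congr rfl fun i _ => ?_
    have hproj : HasFDerivAt
        (⇑(EuclideanSpace.proj (𝕜 := ℝ) i)
          ∘ (fun y => (P y ^ (t - 1) * (v y) ^ ((2:ℝ) - n)) • gradient P y))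
        ((EuclideanSpace.proj (𝕜 := ℝ) i).comp
          (fderiv ℝ (fun y => (P y ^ (t - 1) * (v y) ^ ((2:ℝ) - n)) • gradient P y) x)) x :=
      (EuclideanSpace.proj (𝕜 := ℝ) i).hasFDerivAt.comp x (hW x).hasFDerivAt
    have h3 : (⇑(EuclideanSpace.proj (𝕜 := ℝ) i)
          ∘ (fun y => (P y ^ (t - 1) * (v y) ^ ((2:ℝ) - n)) • gradient P y))
        = (fun y => (P y ^ (t - 1) * (v y) ^ ((2:ℝ) - n))
            * fderiv ℝ P y (EuclideanSpace.single i 1)) := by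
      funext y
      show ((P y ^ (t - 1) * (v y) ^ ((2:ℝ) - n)) • gradient P y) i = _
      rw [PiLp.smul_apply, smul_eq_mul, grad_coord]
    calc fderiv ℝ (fun y => (P y ^ (t - 1) * (v y) ^ ((2:ℝ) - n)) • gradient P y) x
          (EuclideanSpace.single i 1) i
        = ((EuclideanSpace.proj (𝕜 := ℝ) i).comp
            (fderiv ℝ (fun y => (P y ^ (t - 1) * (v y) ^ ((2:ℝ) - n)) • gradient P y) x))
          (EuclideanSpace.single i 1) := rfl
      _ = fderiv ℝ (⇑(EuclideanSpace.proj (𝕜 := ℝ) i)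
            ∘ (fun y => (P y ^ (t - 1) * (v y) ^ ((2:ℝ) - n)) • gradient P y)) x
          (EuclideanSpace.single i 1) := by rw [hproj.fderiv]
      _ = _ := by rw [h3]
  -- value of each coordinate derivative
  have hterm : ∀ i : Fin d,
      fderiv ℝ (fun y => (P y ^ (t - 1) * (v y) ^ ((2:ℝ) - n))
          * fderiv ℝ P y (EuclideanSpace.single i 1)) x (EuclideanSpace.single i 1)
      = (P x ^ (t - 1) * (v x) ^ ((2:ℝ) - n))
          * fderiv ℝ (fun z => fderiv ℝ P z (EuclideanSpace.single i 1)) x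
              (EuclideanSpace.single i 1)
        + (P x ^ (t - 1) * (((2:ℝ) - n) * v x ^ ((2:ℝ) - n - 1)))
            * (fderiv ℝ v x (EuclideanSpace.single i 1)
                * fderiv ℝ P x (EuclideanSpace.single i 1))
        + (v x ^ ((2:ℝ) - n) * ((t - 1) * P x ^ (t - 1 - 1)))
            * (fderiv ℝ P x (EuclideanSpace.single i 1)
                * fderiv ℝ P x (EuclideanSpace.single i 1)) := by
    intro i
    have h := (hfd x).fun_mul ((hpj i) x).hasFDerivAt
    have happ := congrArg (fun (L : EuclideanSpace ℝ (Fin d) →L[ℝ] ℝ)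
      => L (EuclideanSpace.single i 1)) h.fderiv
    simp only [ContinuousLinearMap.add_apply, ContinuousLinearMap.coe_smul', Pi.smul_apply,
      smul_eq_mul] at happ
    rw [happ]
    ring
  -- the summed value of the divergence
  have hdivval : diverg (fun y => (P y ^ (t - 1) * (v y) ^ ((2:ℝ) - n)) • gradient P y) x
      = (P x ^ (t - 1) * (v x) ^ ((2:ℝ) - n))
          * (∑ i, fderiv ℝ (fun z => fderiv ℝ P z (EuclideanSpace.single i 1)) x
              (EuclideanSpace.single i 1))
        + (P x ^ (t - 1) * (((2:ℝ) - n) * v x ^ ((2:ℝ) - n - 1)))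
            * (∑ i, fderiv ℝ v x (EuclideanSpace.single i 1)
                * fderiv ℝ P x (EuclideanSpace.single i 1))
        + (v x ^ ((2:ℝ) - n) * ((t - 1) * P x ^ (t - 1 - 1)))
            * (∑ i, (fderiv ℝ P x (EuclideanSpace.single i 1))^2) := by
    rw [hdivW]
    rw [Finset.sum_congr rfl fun i (_ : i ∈ (Finset.univ : Finset (Fin d))) => hterm i]
    rw [Finset.sum_add_distrib, Finset.sum_add_distrib]
    rw [← Finset.mul_sum, ← Finset.mul_sum, ← Finset.mul_sum]
    congr 1
    rw [Finset.mul_sum, Finset.mul_sum]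
    exact Finset.sum_congr rfl fun i _ => by ring
  -- rpow exponent manipulations
  have r1 : P x ^ (t - 1) = P x ^ (t - 2) * P x := by
    rw [show t - 1 = (t - 2) + 1 by ring, Real.rpow_add_one (hPpos x).ne']
  have r1' : P x ^ (t - 1 - 1) = P x ^ (t - 2) := by
    rw [show t - 1 - 1 = t - 2 by ring]
  have r2 : v x ^ ((2:ℝ) - n) = v x ^ ((1:ℝ) - n) * v x := by
    rw [show (2:ℝ) - n = ((1:ℝ) - n) + 1 by ring, Real.rpow_add_one (hvpos x).ne']
  have r2' : v x ^ ((2:ℝ) - n - 1) = v x ^ ((1:ℝ) - n) := by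
    rw [show (2:ℝ) - n - 1 = (1:ℝ) - n by ring]
  have r3 : P x ^ (t + 1) = P x ^ (t - 2) * P x ^ (3:ℕ) := by
    rw [show t + 1 = (t - 2) + (3:ℕ) by push_cast; ring, Real.rpow_add (hPpos x),
      Real.rpow_natCast]
  have hfrac : (n - (d:ℝ)) / n = (2*n - (d:ℝ)) / n - 1 := by
    field_simp
    ring
  have hμ : 0 ≤ P x ^ (t - 2) * v x ^ ((1:ℝ) - n) :=
    mul_nonneg (Real.rpow_nonneg (hPpos x).le _) (Real.rpow_nonneg (hvpos x).le _)
  have hgP2 : ‖gradient P x‖^2 = ∑ i, (fderiv ℝ P x (EuclideanSpace.single i 1))^2 := by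
    rw [norm_sq_eq_sum]
    exact Finset.sum_congr rfl fun i _ => by rw [grad_coord]
  rw [ge_iff_le, hgP2, hdivval, r1, r1', r2, r2', r3, hfrac]
  have hcore' : 0 ≤ n * P x * (∑ i, ∑ j,
        (fderiv ℝ (fun z => fderiv ℝ v z (EuclideanSpace.single i 1)) x
          (EuclideanSpace.single j 1))^2)
      - (v x / 2 * (∑ i, (fderiv ℝ P x (EuclideanSpace.single i 1))^2)
        + (2*n - (d:ℝ))/n * (P x)^3) := sub_nonneg.mpr core
  have hμcore := mul_nonneg hμ hcore'
  have I4' : (P x ^ (t - 2) * v x ^ ((1:ℝ) - n) * P x)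
        * (v x * (∑ j, fderiv ℝ (fun z => fderiv ℝ P z (EuclideanSpace.single j 1)) x
          (EuclideanSpace.single j 1)))
      = (P x ^ (t - 2) * v x ^ ((1:ℝ) - n) * P x)
        * (n * (∑ i, ∑ j, (fderiv ℝ (fun z => fderiv ℝ v z (EuclideanSpace.single i 1)) x
            (EuclideanSpace.single j 1))^2)
          + (n-2) * (∑ i, fderiv ℝ v x (EuclideanSpace.single i 1)
              * fderiv ℝ P x (EuclideanSpace.single i 1))
          - (P x)^2) := by rw [I4]
  nlinarith [hμcore, I4']
end

section
/- Let d ≥ 2, let n be a real number with n ≥ d, and let v : ℝ^d → ℝ be a positive C³ function satisfying Δv = P at every point, where P := (1/v)·((n/2)‖∇v‖² + c_n). Then for all real numbers q, m and every compactly supported C¹ function ψ : ℝ^d → ℝ, one has (n/2 + 1 - q)·∫ v^(-q)·P^m·‖∇v‖²·ψ dx + c_n·∫ v^(-q)·P^m·ψ dx = - ∫ v^(1-q)·P^m·⟨∇v, ∇ψ⟩ dx - m·∫ v^(1-q)·P^(m-1)·⟨∇v, ∇P⟩·ψ dx, where all integrals are over ℝ^d with respect to Lebesgue measure. -/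
open MeasureTheory Metric
open scoped RealInnerProductSpace

noncomputable def ee (d : ℕ) (i : Fin d) : EuclideanSpace ℝ (Fin d) := EuclideanSpace.single i 1

lemma grad_apply {d : ℕ} (f : EuclideanSpace ℝ (Fin d) → ℝ) (x : EuclideanSpace ℝ (Fin d))
    (i : Fin d) : gradient f x i = fderiv ℝ f x (ee d i) := by
  have h : ⟪gradient f x, ee d i⟫ = fderiv ℝ f x (ee d i) :=
    InnerProductSpace.toDual_symm_apply
  rw [← h, real_inner_comm]
  simp only [ee, EuclideanSpace.inner_single_left, map_one, one_mul]

lemma inner_grad_eq {d : ℕ} (f g : EuclideanSpace ℝ (Fin d) → ℝ) (x : EuclideanSpace ℝ (Fin d)) :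
    ⟪gradient f x, gradient g x⟫ = ∑ i, fderiv ℝ f x (ee d i) * fderiv ℝ g x (ee d i) := by
  rw [PiLp.inner_apply]
  refine Finset.sum_congr rfl fun i _ => ?_
  rw [← grad_apply, ← grad_apply]
  simp [RCLike.inner_apply]
  ring

lemma norm_grad_sq {d : ℕ} (f : EuclideanSpace ℝ (Fin d) → ℝ) (x : EuclideanSpace ℝ (Fin d)) :
    ‖gradient f x‖ ^ 2 = ∑ i, fderiv ℝ f x (ee d i) ^ 2 := by
  rw [← real_inner_self_eq_norm_sq, inner_grad_eq]
  simp [sq]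

lemma ibp_aux {d : ℕ} (f ψ : EuclideanSpace ℝ (Fin d) → ℝ) (i : Fin d)
    (hf : Differentiable ℝ f) (hfc : Continuous f)
    (hfd : Continuous (fun x => fderiv ℝ f x (ee d i)))
    (hψ : ContDiff ℝ 1 ψ) (hψc : HasCompactSupport ψ) :
    ∫ x, f x * fderiv ℝ ψ x (ee d i) ∂volume
      = - ∫ x, fderiv ℝ f x (ee d i) * ψ x ∂volume := by
  have hψd : Continuous (fun x => fderiv ℝ ψ x (ee d i)) :=
    ((hψ.fderiv_right (m := 0) (by norm_num)).clm_apply contDiff_const).continuous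
  have hψcs : HasCompactSupport (fun x => fderiv ℝ ψ x (ee d i)) :=
    hψc.fderiv_apply ℝ (ee d i)
  apply integral_mul_fderiv_eq_neg_fderiv_mul_of_integrable
  · exact (hfd.mul hψ.continuous).integrable_of_hasCompactSupport hψc.mul_left
  · exact (hfc.mul hψd).integrable_of_hasCompactSupport hψcs.mul_left
  · exact (hfc.mul hψ.continuous).integrable_of_hasCompactSupport hψc.mul_left
  · exact fun x _ => hf x
  · exact fun x _ => hψ.differentiable one_ne_zero x

/-- Corollary 4.2, Euclidean case: the integral identity with the weight `P^m`. -/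
theorem stmt_10 (d : ℕ) (hd : 2 ≤ d) (n : ℝ) (hn : (d : ℝ) ≤ n)
    (v : EuclideanSpace ℝ (Fin d) → ℝ) (hv : ContDiff ℝ 3 v) (hvpos : ∀ x, 0 < v x)
    (P : EuclideanSpace ℝ (Fin d) → ℝ)
    (hP : ∀ x, P x = (1 / v x) * ((n / 2) * ‖gradient v x‖ ^ 2 + cExp n))
    (heq : ∀ x, lap v x = P x) :
    ∀ (q m : ℝ) (ψ : EuclideanSpace ℝ (Fin d) → ℝ),
      ContDiff ℝ 1 ψ → HasCompactSupport ψ →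
      (n / 2 + 1 - q) * (∫ x, (v x) ^ (-q) * P x ^ m * ‖gradient v x‖ ^ 2 * ψ x ∂volume)
        + cExp n * (∫ x, (v x) ^ (-q) * P x ^ m * ψ x ∂volume)
      = -(∫ x, (v x) ^ (1 - q) * P x ^ m * ⟪gradient v x, gradient ψ x⟫ ∂volume)
        - m * ∫ x, (v x) ^ (1 - q) * P x ^ (m - 1) * ⟪gradient v x, gradient P x⟫ * ψ x ∂volume := by
  intro q m ψ hψ hψc
  have hn2 : (2:ℝ) ≤ n := le_trans (by exact_mod_cast hd) hn
  have hcpos : 0 < cExp n := by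
    unfold cExp
    split_ifs with h
    · have : 0 < n - 2 := by linarith
      positivity
    · norm_num
  have hv1 : Differentiable ℝ v := hv.differentiable (by norm_num)
  have hfC2 : ContDiff ℝ 2 (fderiv ℝ v) := hv.fderiv_right (m := 2) (by norm_num)
  have hdvC : ∀ i, ContDiff ℝ 2 (fun x => fderiv ℝ v x (ee d i)) :=
    fun i => hfC2.clm_apply contDiff_const
  have hPeq : P = fun x => (v x)⁻¹ * ((n/2) * (∑ i, fderiv ℝ v x (ee d i) ^ 2) + cExp n) :=
    funext fun x => by rw [hP x, norm_grad_sq v x, one_div]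
  have hPC : ContDiff ℝ 2 P := by
    rw [hPeq]
    exact ((hv.of_le (by norm_num)).inv (fun x => (hvpos x).ne')).mul
      ((contDiff_const.mul (ContDiff.sum fun i _ => (hdvC i).pow 2)).add contDiff_const)
  have hPpos : ∀ x, 0 < P x := fun x => by
    rw [hP x]
    exact mul_pos (by rw [one_div]; exact inv_pos.2 (hvpos x))
      (add_pos_of_nonneg_of_pos
        (mul_nonneg (by linarith) (sq_nonneg _)) hcpos)
  have hPd : Differentiable ℝ P := hPC.differentiable (by norm_num)
  have hdPc : ∀ i, Continuous (fun x => fderiv ℝ P x (ee d i)) :=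
    fun i => ((hPC.fderiv_right (m := 1) (by norm_num)).clm_apply contDiff_const).continuous
  have hddvc : ∀ i, Continuous (fun x => fderiv ℝ (fun y => fderiv ℝ v y (ee d i)) x (ee d i)) :=
    fun i => (((hdvC i).fderiv_right (m := 1) (by norm_num)).clm_apply contDiff_const).continuous
  have hrv : ∀ c : ℝ, Continuous (fun x => v x ^ c) :=
    fun c => hv.continuous.rpow_const (fun x => Or.inl (hvpos x).ne')
  have hrP : ∀ c : ℝ, Continuous (fun x => P x ^ c) :=
    fun c => hPC.continuous.rpow_const (fun x => Or.inl (hPpos x).ne')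
  -- derivative of the vector field components
  have hFder : ∀ (i : Fin d) x, HasFDerivAt
      (fun y => v y ^ (1-q) * P y ^ m * fderiv ℝ v y (ee d i))
      ((v x ^ (1-q) * P x ^ m) • fderiv ℝ (fun y => fderiv ℝ v y (ee d i)) x
        + fderiv ℝ v x (ee d i) •
          ((v x ^ (1-q)) • ((m * P x ^ (m-1)) • fderiv ℝ P x)
            + (P x ^ m) • (((1-q) * v x ^ (1-q-1)) • fderiv ℝ v x))) x := by
    intro i x
    have hA : HasFDerivAt (fun y => v y ^ (1-q)) (((1-q) * v x ^ (1-q-1)) • fderiv ℝ v x) x :=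
      (Real.hasDerivAt_rpow_const (p := 1-q) (Or.inl (hvpos x).ne')).comp_hasFDerivAt x
        (hv1 x).hasFDerivAt
    have hB : HasFDerivAt (fun y => P y ^ m) ((m * P x ^ (m-1)) • fderiv ℝ P x) x :=
      (Real.hasDerivAt_rpow_const (p := m) (Or.inl (hPpos x).ne')).comp_hasFDerivAt x
        (hPd x).hasFDerivAt
    have hD : HasFDerivAt (fun y => fderiv ℝ v y (ee d i))
        (fderiv ℝ (fun y => fderiv ℝ v y (ee d i)) x) x :=
      (((hdvC i).differentiable (by norm_num)) x).hasFDerivAt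
    exact (hA.mul hB).mul hD
  have hFder' : ∀ (i : Fin d) x,
      fderiv ℝ (fun y => v y ^ (1-q) * P y ^ m * fderiv ℝ v y (ee d i)) x (ee d i)
      = v x ^ (1-q) * P x ^ m * fderiv ℝ (fun y => fderiv ℝ v y (ee d i)) x (ee d i)
      + fderiv ℝ v x (ee d i) *
          (v x ^ (1-q) * (m * P x ^ (m-1) * fderiv ℝ P x (ee d i))
            + P x ^ m * ((1-q) * v x ^ (1-q-1) * fderiv ℝ v x (ee d i))) := by
    intro i x
    rw [(hFder i x).fderiv]
    simp [ContinuousLinearMap.add_apply, ContinuousLinearMap.smul_apply, smul_eq_mul]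
    ring
  -- the divergence identity
  have hlap : ∀ x, lap v x = ∑ i, fderiv ℝ (fun y => fderiv ℝ v y (ee d i)) x (ee d i) := by
    intro x
    unfold lap
    refine Finset.sum_congr rfl fun i _ => ?_
    rw [iteratedFDeriv_two_apply,
      fderiv_clm_apply ((hfC2.differentiable (by norm_num)) x) (differentiableAt_const _)]
    simp [ee]
  have hdiv : ∀ x,
      ∑ i, fderiv ℝ (fun y => v y ^ (1-q) * P y ^ m * fderiv ℝ v y (ee d i)) x (ee d i)
      = (n/2 + 1 - q) * (v x ^ (-q) * P x ^ m * ‖gradient v x‖ ^ 2)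
        + cExp n * (v x ^ (-q) * P x ^ m)
        + m * (v x ^ (1-q) * P x ^ (m-1) * ⟪gradient v x, gradient P x⟫) := by
    intro x
    have hvx := hvpos x
    have hvq : v x ^ (1-q-1) = v x ^ (-q) := by rw [show (1-q-1 : ℝ) = -q by ring]
    have hvq2 : v x ^ (1-q) * (v x)⁻¹ = v x ^ (-q) := by
      rw [← Real.rpow_neg_one (v x), ← Real.rpow_add hvx]
      congr 1
      ring
    calc ∑ i, fderiv ℝ (fun y => v y ^ (1-q) * P y ^ m * fderiv ℝ v y (ee d i)) x (ee d i)
        = ∑ i, (v x ^ (1-q) * P x ^ m * fderiv ℝ (fun y => fderiv ℝ v y (ee d i)) x (ee d i)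
            + (v x ^ (1-q) * (m * P x ^ (m-1))) * (fderiv ℝ v x (ee d i) * fderiv ℝ P x (ee d i))
            + (P x ^ m * ((1-q) * v x ^ (-q))) * fderiv ℝ v x (ee d i) ^ 2) := by
          refine Finset.sum_congr rfl fun i _ => ?_
          rw [hFder' i x, hvq]; ring
      _ = v x ^ (1-q) * P x ^ m * (∑ i, fderiv ℝ (fun y => fderiv ℝ v y (ee d i)) x (ee d i))
            + (v x ^ (1-q) * (m * P x ^ (m-1))) * (∑ i, fderiv ℝ v x (ee d i) * fderiv ℝ P x (ee d i))
            + (P x ^ m * ((1-q) * v x ^ (-q))) * (∑ i, fderiv ℝ v x (ee d i) ^ 2) := by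
          rw [Finset.sum_add_distrib, Finset.sum_add_distrib, ← Finset.mul_sum, ← Finset.mul_sum,
            ← Finset.mul_sum]
      _ = (n/2 + 1 - q) * (v x ^ (-q) * P x ^ m * ‖gradient v x‖ ^ 2)
            + cExp n * (v x ^ (-q) * P x ^ m)
            + m * (v x ^ (1-q) * P x ^ (m-1) * ⟪gradient v x, gradient P x⟫) := by
          rw [← hlap x, ← inner_grad_eq, ← norm_grad_sq, heq x, hP x, one_div, ← hvq2]
          ring
  -- continuity facts
  have hNc : Continuous (fun x => ‖gradient v x‖ ^ 2) := by
    have h : (fun x => ‖gradient v x‖ ^ 2) = fun x => ∑ i, fderiv ℝ v x (ee d i) ^ 2 :=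
      funext (norm_grad_sq v)
    rw [h]
    exact continuous_finset_sum _ fun i _ => ((hdvC i).continuous.pow 2)
  have hIc : Continuous (fun x => ⟪gradient v x, gradient P x⟫) := by
    have h : (fun x => ⟪gradient v x, gradient P x⟫)
        = fun x => ∑ i, fderiv ℝ v x (ee d i) * fderiv ℝ P x (ee d i) :=
      funext (inner_grad_eq v P)
    rw [h]
    exact continuous_finset_sum _ fun i _ => ((hdvC i).continuous.mul (hdPc i))
  have hiA : Integrable (fun x => v x ^ (-q) * P x ^ m * ‖gradient v x‖ ^ 2 * ψ x) volume :=
    ((((hrv (-q)).mul (hrP m)).mul hNc).mul hψ.continuous).integrable_of_hasCompactSupport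
      hψc.mul_left
  have hiB : Integrable (fun x => v x ^ (-q) * P x ^ m * ψ x) volume :=
    (((hrv (-q)).mul (hrP m)).mul hψ.continuous).integrable_of_hasCompactSupport hψc.mul_left
  have hiD : Integrable
      (fun x => v x ^ (1-q) * P x ^ (m-1) * ⟪gradient v x, gradient P x⟫ * ψ x) volume :=
    ((((hrv (1-q)).mul (hrP (m-1))).mul hIc).mul hψ.continuous).integrable_of_hasCompactSupport
      hψc.mul_left
  have hFdcont : ∀ i, Continuous (fun x =>
      fderiv ℝ (fun y => v y ^ (1-q) * P y ^ m * fderiv ℝ v y (ee d i)) x (ee d i)) := by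
    intro i
    have h : (fun x =>
        fderiv ℝ (fun y => v y ^ (1-q) * P y ^ m * fderiv ℝ v y (ee d i)) x (ee d i))
        = fun x => v x ^ (1-q) * P x ^ m
              * fderiv ℝ (fun y => fderiv ℝ v y (ee d i)) x (ee d i)
            + fderiv ℝ v x (ee d i) *
              (v x ^ (1-q) * (m * P x ^ (m-1) * fderiv ℝ P x (ee d i))
                + P x ^ m * ((1-q) * v x ^ (1-q-1) * fderiv ℝ v x (ee d i))) :=
      funext (hFder' i)
    rw [h]
    exact (((hrv (1-q)).mul (hrP m)).mul (hddvc i)).add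
      ((hdvC i).continuous.mul
        (((hrv (1-q)).mul ((continuous_const.mul (hrP (m-1))).mul (hdPc i))).add
          ((hrP m).mul ((continuous_const.mul (hrv (1-q-1))).mul (hdvC i).continuous))))
  -- integration by parts in each coordinate direction
  have hibp : ∀ i, ∫ x, (v x ^ (1-q) * P x ^ m * fderiv ℝ v x (ee d i))
        * fderiv ℝ ψ x (ee d i) ∂volume
      = - ∫ x, fderiv ℝ (fun y => v y ^ (1-q) * P y ^ m * fderiv ℝ v y (ee d i)) x (ee d i)
          * ψ x ∂volume :=
    fun i => ibp_aux _ ψ i (fun x => (hFder i x).differentiableAt)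
      (((hrv (1-q)).mul (hrP m)).mul (hdvC i).continuous) (hFdcont i) hψ hψc
  have e2 : ∫ x, (∑ i, fderiv ℝ (fun y => v y ^ (1-q) * P y ^ m * fderiv ℝ v y (ee d i)) x
        (ee d i)) * ψ x ∂volume
      = ∑ i, ∫ x, fderiv ℝ (fun y => v y ^ (1-q) * P y ^ m * fderiv ℝ v y (ee d i)) x (ee d i)
          * ψ x ∂volume := by
    rw [← integral_finset_sum]
    · refine integral_congr_ae (Filter.Eventually.of_forall fun x => ?_)
      simp only [Finset.sum_mul]
    · intro i _
      exact ((hFdcont i).mul hψ.continuous).integrable_of_hasCompactSupport hψc.mul_left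
  have hC : ∫ x, v x ^ (1-q) * P x ^ m * ⟪gradient v x, gradient ψ x⟫ ∂volume
      = - ∫ x, (∑ i, fderiv ℝ (fun y => v y ^ (1-q) * P y ^ m * fderiv ℝ v y (ee d i)) x
          (ee d i)) * ψ x ∂volume := by
    calc ∫ x, v x ^ (1-q) * P x ^ m * ⟪gradient v x, gradient ψ x⟫ ∂volume
        = ∑ i, ∫ x, (v x ^ (1-q) * P x ^ m * fderiv ℝ v x (ee d i))
            * fderiv ℝ ψ x (ee d i) ∂volume := by
          rw [← integral_finset_sum]
          · refine integral_congr_ae (Filter.Eventually.of_forall fun x => ?_)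
            simp only [inner_grad_eq v ψ, Finset.mul_sum]
            exact Finset.sum_congr rfl fun i _ => by ring
          · intro i _
            exact ((((hrv (1-q)).mul (hrP m)).mul (hdvC i).continuous).mul
              (((hψ.fderiv_right (m := 0) (by norm_num)).clm_apply
                contDiff_const).continuous)).integrable_of_hasCompactSupport
              (hψc.fderiv_apply ℝ (ee d i)).mul_left
      _ = ∑ i, - ∫ x, fderiv ℝ (fun y => v y ^ (1-q) * P y ^ m * fderiv ℝ v y (ee d i)) x
            (ee d i) * ψ x ∂volume := Finset.sum_congr rfl fun i _ => hibp i
      _ = - ∑ i, ∫ x, fderiv ℝ (fun y => v y ^ (1-q) * P y ^ m * fderiv ℝ v y (ee d i)) x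
            (ee d i) * ψ x ∂volume := by rw [Finset.sum_neg_distrib]
      _ = - ∫ x, (∑ i, fderiv ℝ (fun y => v y ^ (1-q) * P y ^ m * fderiv ℝ v y (ee d i)) x
            (ee d i)) * ψ x ∂volume := by rw [e2]
  have hDiv : ∫ x, (∑ i, fderiv ℝ (fun y => v y ^ (1-q) * P y ^ m * fderiv ℝ v y (ee d i)) x
        (ee d i)) * ψ x ∂volume
      = (n/2 + 1 - q) * (∫ x, v x ^ (-q) * P x ^ m * ‖gradient v x‖ ^ 2 * ψ x ∂volume)
        + cExp n * (∫ x, v x ^ (-q) * P x ^ m * ψ x ∂volume)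
        + m * (∫ x, v x ^ (1-q) * P x ^ (m-1) * ⟪gradient v x, gradient P x⟫ * ψ x ∂volume) := by
    have e3 : ∀ x, (∑ i, fderiv ℝ (fun y => v y ^ (1-q) * P y ^ m * fderiv ℝ v y (ee d i)) x
          (ee d i)) * ψ x
        = (n/2 + 1 - q) * (v x ^ (-q) * P x ^ m * ‖gradient v x‖ ^ 2 * ψ x)
          + cExp n * (v x ^ (-q) * P x ^ m * ψ x)
          + m * (v x ^ (1-q) * P x ^ (m-1) * ⟪gradient v x, gradient P x⟫ * ψ x) := fun x => by
      rw [hdiv x]; ring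
    rw [integral_congr_ae (Filter.Eventually.of_forall e3), integral_add, integral_add,
      integral_const_mul, integral_const_mul, integral_const_mul]
    · exact hiA.const_mul _
    · exact hiB.const_mul _
    · exact (hiA.const_mul _).add (hiB.const_mul _)
    · exact hiD.const_mul _
  rw [hC, hDiv]
  ring
end
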